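/- Let n, m be natural numbers with m even, and consider the real block matrix M of size (2n+m) with blocks M = [[B, I_n, -C],[-I_n, 0, 0],[Cᵀ, 0, Ω]] where B is an n×n skew-symmetric matrix, C is an n×m matrix, and Ω is an m×m invertible skew-symmetric matrix. Then M is invertible. -/
import Mathlib


/-- The block matrix `M = [[B, I, -C], [-I, 0, 0], [Cᵀ, 0, Ω]]` with `B`
skew-symmetric, `Ω` skew-symmetric and invertible, and `m` even, is invertible.
(This is the coordinate matrix of the Sternberg symplectic form `Ω^♯`.) -/
theorem stmt3 (n m : ℕ) (hm : Even m)
    (B : Matrix (Fin n) (Fin n) ℝ) (C : Matrix (Fin n) (Fin m) ℝ)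
    (Ω : Matrix (Fin m) (Fin m) ℝ)
    (hB : Matrix.transpose B = -B) (hΩskew : Matrix.transpose Ω = -Ω) (hΩ : IsUnit Ω) :
    IsUnit (Matrix.of (fun i j : Fin n ⊕ Fin n ⊕ Fin m =>
      match i, j with
      | Sum.inl i, Sum.inl j => B i j
      | Sum.inl i, Sum.inr (Sum.inl j) => if i = j then (1 : ℝ) else 0
      | Sum.inl i, Sum.inr (Sum.inr j) => -(C i j)
      | Sum.inr (Sum.inl i), Sum.inl j => -(if i = j then (1 : ℝ) else 0)
      | Sum.inr (Sum.inl _), Sum.inr _ => 0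
      | Sum.inr (Sum.inr i), Sum.inl j => C j i
      | Sum.inr (Sum.inr _), Sum.inr (Sum.inl _) => 0
      | Sum.inr (Sum.inr i), Sum.inr (Sum.inr j) => Ω i j)) := by
  set D := Ω⁻¹ with hD
  have hΩdet : IsUnit Ω.det := (Matrix.isUnit_iff_isUnit_det Ω).mp hΩ
  have hΩD : Ω * D = 1 := Matrix.mul_nonsing_inv Ω hΩdet
  set M : Matrix (Fin n ⊕ Fin n ⊕ Fin m) (Fin n ⊕ Fin n ⊕ Fin m) ℝ :=
    Matrix.of (fun i j : Fin n ⊕ Fin n ⊕ Fin m =>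
      match i, j with
      | Sum.inl i, Sum.inl j => B i j
      | Sum.inl i, Sum.inr (Sum.inl j) => if i = j then (1 : ℝ) else 0
      | Sum.inl i, Sum.inr (Sum.inr j) => -(C i j)
      | Sum.inr (Sum.inl i), Sum.inl j => -(if i = j then (1 : ℝ) else 0)
      | Sum.inr (Sum.inl _), Sum.inr _ => 0
      | Sum.inr (Sum.inr i), Sum.inl j => C j i
      | Sum.inr (Sum.inr _), Sum.inr (Sum.inl _) => 0
      | Sum.inr (Sum.inr i), Sum.inr (Sum.inr j) => Ω i j) with hM
  set N : Matrix (Fin n ⊕ Fin n ⊕ Fin m) (Fin n ⊕ Fin n ⊕ Fin m) ℝ :=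
    Matrix.of (fun i j : Fin n ⊕ Fin n ⊕ Fin m =>
      match i, j with
      | Sum.inl _, Sum.inl _ => 0
      | Sum.inl i, Sum.inr (Sum.inl j) => -(if i = j then (1 : ℝ) else 0)
      | Sum.inl _, Sum.inr (Sum.inr _) => 0
      | Sum.inr (Sum.inl i), Sum.inl j => if i = j then (1 : ℝ) else 0
      | Sum.inr (Sum.inl i), Sum.inr (Sum.inl j) => B i j + (C * (D * C.transpose)) i j
      | Sum.inr (Sum.inl i), Sum.inr (Sum.inr j) => (C * D) i j
      | Sum.inr (Sum.inr _), Sum.inl _ => 0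
      | Sum.inr (Sum.inr i), Sum.inr (Sum.inl j) => (D * C.transpose) i j
      | Sum.inr (Sum.inr i), Sum.inr (Sum.inr j) => D i j) with hN
  have key : M * N = 1 := by
    ext i j
    rcases i with i | i | i <;> rcases j with j | j | j <;>
      simp [hM, hN, Matrix.mul_apply, Fintype.sum_sum_type, Matrix.one_apply,
        mul_ite, ite_mul, Finset.sum_ite_eq, Finset.sum_ite_eq',
        Finset.mul_sum, Finset.sum_neg_distrib]
    · have h1 : ∀ l, (∑ x, Ω i x * D x l) = if i = l then (1:ℝ) else 0 := by
        intro l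
        have := congrFun (congrFun hΩD i) l
        simpa [Matrix.mul_apply, Matrix.one_apply] using this
      rw [Finset.sum_comm]
      simp_rw [← mul_assoc, ← Finset.sum_mul, h1]
      simp [ite_mul, Finset.sum_ite_eq']
    · have := congrFun (congrFun hΩD i) j
      simpa [Matrix.mul_apply, Matrix.one_apply] using this
  exact ⟨⟨M, N, key, mul_eq_one_comm.mp key⟩, rfl⟩
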